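/- Let ψ₀ ∈ ℝ and set s₀ = sinh ψ₀, c₀ = cosh ψ₀. Define on the interval (−π/2, π/2) the functions ψ(t) = arsinh(s₀ · cos t / √(1 + s₀² · sin² t)), θ(t) = arsinh(s₀ · sin t), φ(t) = arctan(c₀ · tan t). Then for all t ∈ (−π/2, π/2): ψ'(t) = −cosh(ψ(t)) · tanh(θ(t)), θ'(t) = sinh(ψ(t)), φ'(t) = cosh(ψ(t)) / cosh(θ(t)), and moreover ψ(0) = ψ₀, θ(0) = 0, φ(0) = 0. -/

import Mathlib

open Real

/-- Explicit solution of the normal Hamiltonian system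
`ψ' = -cosh ψ · tanh θ`, `θ' = sinh ψ`, `φ' = cosh ψ / cosh θ`
with initial conditions `ψ(0) = ψ₀`, `θ(0) = 0`, `φ(0) = 0`, on `(-π/2, π/2)`. -/
theorem stmt_4 (ψ₀ : ℝ) (s₀ c₀ : ℝ) (hs₀ : s₀ = sinh ψ₀) (hc₀ : c₀ = cosh ψ₀)
    (ψ θ φ : ℝ → ℝ)
    (hψ : ∀ t, ψ t = arsinh (s₀ * cos t / sqrt (1 + s₀ ^ 2 * sin t ^ 2)))
    (hθ : ∀ t, θ t = arsinh (s₀ * sin t))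
    (hφ : ∀ t, φ t = arctan (c₀ * tan t)) :
    (∀ t ∈ Set.Ioo (-(π / 2)) (π / 2),
      HasDerivAt ψ (-cosh (ψ t) * tanh (θ t)) t ∧
      HasDerivAt θ (sinh (ψ t)) t ∧
      HasDerivAt φ (cosh (ψ t) / cosh (θ t)) t) ∧
    ψ 0 = ψ₀ ∧ θ 0 = 0 ∧ φ 0 = 0 := by
  have hψf : ψ = fun t => arsinh (s₀ * cos t / sqrt (1 + s₀ ^ 2 * sin t ^ 2)) := funext hψ
  have hθf : θ = fun t => arsinh (s₀ * sin t) := funext hθ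
  have hφf : φ = fun t => arctan (c₀ * tan t) := funext hφ
  subst hψf hθf hφf
  have hc0 : 0 < c₀ := hc₀ ▸ cosh_pos ψ₀
  have hc0sq : c₀ ^ 2 = 1 + s₀ ^ 2 := by
    rw [hs₀, hc₀]; nlinarith [Real.cosh_sq_sub_sinh_sq ψ₀]
  refine ⟨fun t ht => ?_, ?_, ?_, ?_⟩
  · set Q : ℝ := 1 + s₀ ^ 2 * sin t ^ 2 with hQdef
    have hQ : 0 < Q := by positivity
    have hrQ : 0 < sqrt Q := Real.sqrt_pos.mpr hQ
    have hrQ2 : sqrt Q ^ 2 = Q := Real.sq_sqrt hQ.le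
    have hpy : sin t ^ 2 + cos t ^ 2 = 1 := sin_sq_add_cos_sq t
    have hcos : 0 < cos t := Real.cos_pos_of_mem_Ioo ht
    -- cosh values
    have hcoshθ : cosh (arsinh (s₀ * sin t)) = sqrt Q := by
      rw [Real.cosh_arsinh]; congr 1; ring
    have hone : 1 + (s₀ * cos t / sqrt Q) ^ 2 = c₀ ^ 2 / Q := by
      field_simp
      rw [hrQ2]; linear_combination Q * hQdef + Q * s₀ ^ 2 * hpy - Q * hc0sq
    have hcoshψ : cosh (arsinh (s₀ * cos t / sqrt Q)) = c₀ / sqrt Q := by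
      rw [Real.cosh_arsinh, hone, Real.sqrt_div (by positivity), Real.sqrt_sq hc0.le]
    have htanhθ : tanh (arsinh (s₀ * sin t)) = s₀ * sin t / sqrt Q := by
      rw [Real.tanh_eq_sinh_div_cosh, Real.sinh_arsinh, hcoshθ]
    -- derivative of θ
    have hθ' : HasDerivAt (fun x => arsinh (s₀ * sin x))
        ((sqrt (1 + (s₀ * sin t) ^ 2))⁻¹ * (s₀ * cos t)) t :=
      (Real.hasDerivAt_arsinh _).comp t ((Real.hasDerivAt_sin t).const_mul s₀)
    have hθeq : (sqrt (1 + (s₀ * sin t) ^ 2))⁻¹ * (s₀ * cos t)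
        = sinh (arsinh (s₀ * cos t / sqrt Q)) := by
      rw [Real.sinh_arsinh]
      have : 1 + (s₀ * sin t) ^ 2 = Q := by ring
      rw [this]; field_simp
    -- derivative of inner Q function and sqrt Q
    have hQ' : HasDerivAt (fun x => 1 + s₀ ^ 2 * sin x ^ 2)
        (s₀ ^ 2 * (2 * sin t ^ 1 * cos t)) t :=
      (((Real.hasDerivAt_sin t).pow 2).const_mul (s₀ ^ 2)).const_add 1
    have hg : HasDerivAt (fun x => sqrt (1 + s₀ ^ 2 * sin x ^ 2))
        (1 / (2 * sqrt Q) * (s₀ ^ 2 * (2 * sin t ^ 1 * cos t))) t :=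
      (Real.hasDerivAt_sqrt hQ.ne').comp t hQ'
    have hu : HasDerivAt (fun x => s₀ * cos x / sqrt (1 + s₀ ^ 2 * sin x ^ 2))
        ((s₀ * -sin t * sqrt Q - s₀ * cos t * (1 / (2 * sqrt Q) * (s₀ ^ 2 * (2 * sin t ^ 1 * cos t)))) / sqrt Q ^ 2) t :=
      ((Real.hasDerivAt_cos t).const_mul s₀).div hg hrQ.ne'
    have hψ' : HasDerivAt (fun x => arsinh (s₀ * cos x / sqrt (1 + s₀ ^ 2 * sin x ^ 2)))
        ((sqrt (1 + (s₀ * cos t / sqrt Q) ^ 2))⁻¹ *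
          ((s₀ * -sin t * sqrt Q - s₀ * cos t * (1 / (2 * sqrt Q) * (s₀ ^ 2 * (2 * sin t ^ 1 * cos t)))) / sqrt Q ^ 2)) t :=
      (Real.hasDerivAt_arsinh _).comp t hu
    -- derivative of φ
    have htan : HasDerivAt (fun x => c₀ * tan x) (c₀ * (1 / cos t ^ 2)) t :=
      (Real.hasDerivAt_tan hcos.ne').const_mul c₀
    have hφ' : HasDerivAt (fun x => arctan (c₀ * tan x))
        (1 / (1 + (c₀ * tan t) ^ 2) * (c₀ * (1 / cos t ^ 2))) t :=
      (Real.hasDerivAt_arctan _).comp t htan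
    refine ⟨?_, ?_, ?_⟩
    · convert hψ' using 1
      rw [hcoshψ, htanhθ]
      rw [show (1 + (s₀ * cos t / sqrt Q) ^ 2) = c₀ ^ 2 / Q from hone,
        Real.sqrt_div (by positivity), Real.sqrt_sq hc0.le]
      rw [← hrQ2]
      field_simp
      rw [hrQ2, hrQ2]; linear_combination (s₀*sin t) * hQdef + (s₀^3*sin t) * hpy - (s₀*sin t) * hc0sq
    · convert hθ' using 1
      rw [← hθeq]
    · convert hφ' using 1
      rw [hcoshψ, hcoshθ, Real.tan_eq_sin_div_cos]
      rw [← hrQ2]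
      field_simp
      rw [hrQ2, hrQ2]; linear_combination hpy + sin t ^ 2 * hc0sq - hQdef
  · simp [hs₀, Real.arsinh_sinh]
  · simp
  · simp
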